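/- Let q ≥ 3 and let ∇ ∈ ℝ^{p×n} be the discrete gradient operator of the 2-dimensional regular grid graph on V = {0,…,q−1}², with n = q² and p = 2q(q−1). Let ℓ be an integer with 4 < ℓ ≤ p and let m ∈ ℕ satisfy m ≥ n − (1/2)(ℓ + √(2ℓ + 1) − 1). Then κ_∇(ℓ) ≤ m; that is, the number of measurements m meets the necessary and sufficient condition of the known-cosupport uniqueness criterion, so that under the assumptions of that criterion every ℓ-cosparse vector with known cosupport is uniquely recoverable from m measurements. -/

import Mathlib

/-- Base-`q` encoding of a grid point, used to orient the edges of the grid graph. -/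
def enc (q d : ℕ) (v : Fin d → Fin q) : ℕ := ∑ i : Fin d, q ^ (i : ℕ) * (v i : ℕ)

/-- The (oriented) edges of the regular grid graph on `{0,…,q−1}^d`: pairs of vertices at
ℓ1-distance 1, canonically oriented. They index the rows of the discrete gradient. -/
abbrev OEdge (q d : ℕ) : Type :=
  {e : (Fin d → Fin q) × (Fin d → Fin q) //
    (∑ i, |(e.1 i : ℤ) - (e.2 i : ℤ)|) = 1 ∧ enc q d e.1 < enc q d e.2}

/-- The discrete gradient operator of the regular grid graph: one row per edge
`e = (v₁, v₂)`, with entry `−1` in the column of `v₁`, `+1` in the column of `v₂`. -/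
def grad (q d : ℕ) : Matrix (OEdge q d) (Fin d → Fin q) ℝ :=
  Matrix.of fun e v => if v = e.1.2 then 1 else if v = e.1.1 then -1 else 0

/-- `W_Λ`: the nullspace of the rows of the discrete gradient indexed by `Λ`. -/
noncomputable def Wgrad (q d : ℕ) (Λ : Finset (OEdge q d)) :
    Submodule ℝ ((Fin d → Fin q) → ℝ) :=
  ⨅ e ∈ Λ, LinearMap.ker
    ((LinearMap.proj e : (OEdge q d → ℝ) →ₗ[ℝ] ℝ) ∘ₗ (grad q d).mulVecLin)

/-- `κ_∇(ℓ) = max{dim W_Λ : Λ ⊆ E, |Λ| ≥ ℓ}` for the discrete gradient of the grid. -/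
noncomputable def kappaGrad (q d ℓ : ℕ) : ℕ :=
  (Finset.univ.filter (fun Λ : Finset (OEdge q d) => ℓ ≤ Λ.card)).sup
    (fun Λ => Module.finrank ℝ (Wgrad q d Λ))


lemma enc_two (q : ℕ) (v : Fin 2 → Fin q) : enc q 2 v = (v 0 : ℕ) + q * (v 1 : ℕ) := by
  unfold enc; rw [Fin.sum_univ_two]; simp

lemma edge_struct (q : ℕ) (e : OEdge q 2) :
    ((e.1.2 0 : ℕ) = (e.1.1 0 : ℕ) + 1 ∧ e.1.2 1 = e.1.1 1) ∨
    ((e.1.2 1 : ℕ) = (e.1.1 1 : ℕ) + 1 ∧ e.1.2 0 = e.1.1 0) := by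
  obtain ⟨hsum, henc⟩ := e.2
  rw [Fin.sum_univ_two] at hsum
  rw [enc_two, enc_two] at henc
  set u := e.1.1 with hu
  set w := e.1.2 with hw
  obtain ⟨A, hA⟩ : ∃ A, |(u 0 : ℤ) - (w 0 : ℤ)| = A := ⟨_, rfl⟩
  obtain ⟨B, hB⟩ : ∃ B, |(u 1 : ℤ) - (w 1 : ℤ)| = B := ⟨_, rfl⟩
  have hA0 : 0 ≤ A := hA ▸ abs_nonneg _
  have hB0 : 0 ≤ B := hB ▸ abs_nonneg _
  rw [hA, hB] at hsum
  have hcases : (A = 0 ∧ B = 1) ∨ (A = 1 ∧ B = 0) := by omega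
  have habs : ∀ (x y : ℤ), |x - y| = 1 → (x = y + 1 ∨ y = x + 1) := by
    intro x y h
    rcases (abs_eq (by norm_num : (0:ℤ) ≤ 1)).mp h with h' | h' <;> omega
  rcases hcases with ⟨h1, h2⟩ | ⟨h1, h2⟩
  · -- vertical: u 0 = w 0
    have e0 : (u 0 : ℤ) = (w 0 : ℤ) := by
      have := abs_eq_zero.mp (hA.trans h1); omega
    have e0' : u 0 = w 0 := Fin.ext (by exact_mod_cast e0)
    rcases habs _ _ (hB.trans h2) with h' | h'
    · exfalso
      have h'' : (u 1 : ℕ) = (w 1 : ℕ) + 1 := by exact_mod_cast h'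
      have h0 : (u 0 : ℕ) = (w 0 : ℕ) := by rw [e0']
      have hq : 0 < q := (u 0).pos
      have : q * (u 1 : ℕ) = q * (w 1 : ℕ) + q := by rw [h'']; ring
      nlinarith
    · right
      exact ⟨by exact_mod_cast h', e0'.symm⟩
  · -- horizontal
    have e1 : (u 1 : ℤ) = (w 1 : ℤ) := by
      have := abs_eq_zero.mp (hB.trans h2); omega
    have e1' : u 1 = w 1 := Fin.ext (by exact_mod_cast e1)
    rcases habs _ _ (hA.trans h1) with h' | h'
    · exfalso
      have h'' : (u 0 : ℕ) = (w 0 : ℕ) + 1 := by exact_mod_cast h'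
      have h0 : q * (u 1 : ℕ) = q * (w 1 : ℕ) := by rw [e1']
      omega
    · left
      exact ⟨by exact_mod_cast h', e1'.symm⟩

lemma edge_ne (q : ℕ) (e : OEdge q 2) : e.1.1 ≠ e.1.2 := by
  intro h
  have := e.2.2
  rw [h] at this
  exact lt_irrefl _ this

/-- Graph on the grid vertices with edge set `Λ`. -/
def gridGraph (q : ℕ) (Λ : Finset (OEdge q 2)) : SimpleGraph (Fin 2 → Fin q) where
  Adj u w := u ≠ w ∧ ∃ e ∈ Λ, (e.1.1 = u ∧ e.1.2 = w) ∨ (e.1.1 = w ∧ e.1.2 = u)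
  symm := by
    constructor
    rintro u w ⟨h, e, he, h'⟩
    exact ⟨h.symm, e, he, h'.symm⟩
  loopless := by constructor; rintro u ⟨h, _⟩; exact h rfl

lemma mem_Wgrad (q : ℕ) (Λ : Finset (OEdge q 2)) (x : (Fin 2 → Fin q) → ℝ) :
    x ∈ Wgrad q 2 Λ ↔ ∀ e ∈ Λ, x e.1.2 = x e.1.1 := by
  unfold Wgrad
  simp only [Submodule.mem_iInf, LinearMap.mem_ker, LinearMap.comp_apply,
    LinearMap.proj_apply, Matrix.mulVecLin_apply]
  apply forall_congr'
  intro e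
  apply forall_congr'
  intro _
  have hne : e.1.1 ≠ e.1.2 := edge_ne q e
  rw [Matrix.mulVec, dotProduct]
  have hfun : ∀ v, grad q 2 e v * x v =
      (if v = e.1.2 then x e.1.2 else 0) + (if v = e.1.1 then -x e.1.1 else 0) := by
    intro v
    unfold grad
    by_cases h2 : v = e.1.2 <;> by_cases h1 : v = e.1.1 <;>
      simp [Matrix.of_apply, h1, h2] <;> subst_vars <;> simp_all
  rw [Finset.sum_congr rfl (fun v _ => hfun v), Finset.sum_add_distrib,
    Finset.sum_ite_eq' Finset.univ, Finset.sum_ite_eq' Finset.univ]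
  simp only [Finset.mem_univ, if_true]
  constructor
  · intro h; linarith
  · intro h; rw [h]; ring

lemma const_on_reachable (q : ℕ) (Λ : Finset (OEdge q 2)) (x : (Fin 2 → Fin q) → ℝ)
    (hx : x ∈ Wgrad q 2 Λ) {u w : Fin 2 → Fin q}
    (h : (gridGraph q Λ).Reachable u w) : x u = x w := by
  rw [mem_Wgrad] at hx
  obtain ⟨p⟩ := h
  induction p with
  | nil => rfl
  | cons hadj p ih =>
    refine Eq.trans ?_ ih
    obtain ⟨-, e, he, h'⟩ := hadj
    rcases h' with ⟨h1, h2⟩ | ⟨h1, h2⟩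
    · rw [← h1, ← h2]; exact (hx e he).symm
    · rw [← h1, ← h2]; exact hx e he

lemma finrank_Wgrad_le (q : ℕ) (Λ : Finset (OEdge q 2))
    [Fintype (gridGraph q Λ).ConnectedComponent] :
    Module.finrank ℝ (Wgrad q 2 Λ) ≤ Fintype.card (gridGraph q Λ).ConnectedComponent := by
  classical
  let Φ : Wgrad q 2 Λ →ₗ[ℝ] ((gridGraph q Λ).ConnectedComponent → ℝ) :=
    { toFun := fun x c => x.1 c.out
      map_add' := by intros; rfl
      map_smul' := by intros; rfl }
  have hinj : Function.Injective Φ := by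
    rw [injective_iff_map_eq_zero]
    intro x hx0
    ext v
    have h1 : x.1 v = x.1 ((gridGraph q Λ).connectedComponentMk v).out := by
      apply const_on_reachable q Λ x.1 x.2
      exact (SimpleGraph.ConnectedComponent.eq.mp
        ((gridGraph q Λ).connectedComponentMk v).out_eq).symm
    have h2 := congrFun hx0 ((gridGraph q Λ).connectedComponentMk v)
    simp only [ZeroMemClass.coe_zero, Pi.zero_apply]
    rw [h1]
    exact h2
  calc Module.finrank ℝ (Wgrad q 2 Λ)
      ≤ Module.finrank ℝ ((gridGraph q Λ).ConnectedComponent → ℝ) :=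
        LinearMap.finrank_le_finrank_of_injective hinj
    _ = Fintype.card (gridGraph q Λ).ConnectedComponent := Module.finrank_pi ℝ

open Finset in
lemma card_edges_row (q : ℕ) (S : Finset (Fin 2 → Fin q)) (E : Finset (OEdge q 2))
    (hE : ∀ e ∈ E, e.1.1 ∈ S ∧ e.1.2 ∈ S) (hH : ∀ e ∈ E, e.1.1 1 = e.1.2 1) :
    E.card + (S.image fun v => v 1).card ≤ S.card := by
  classical
  set M := S.filter (fun v => ∀ w ∈ S, w 1 = v 1 → (w 0 : ℕ) ≤ (v 0 : ℕ)) with hM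
  have hMS : M ⊆ S := filter_subset _ _
  -- rows ≤ |M|
  have h1 : (S.image fun v => v 1).card ≤ M.card := by
    have hsub : (S.image fun v => v 1) ⊆ M.image fun v => v 1 := by
      intro y hy
      obtain ⟨v, hv, hvy⟩ := mem_image.mp hy
      have hne : (S.filter fun w => w 1 = y).Nonempty := ⟨v, mem_filter.mpr ⟨hv, hvy⟩⟩
      obtain ⟨b, hb, hmax⟩ := Finset.exists_max_image _ (fun w => (w 0 : ℕ)) hne
      obtain ⟨hbS, hby⟩ := mem_filter.mp hb
      refine mem_image.mpr ⟨b, ?_, hby⟩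
      exact mem_filter.mpr ⟨hbS, fun w hw hwb => hmax w (mem_filter.mpr ⟨hw, hwb.trans hby⟩)⟩
    exact (card_le_card hsub).trans (card_image_le)
  -- horizontal structure of each edge
  have hstruct : ∀ e ∈ E, ((e.1.2 0 : ℕ) = (e.1.1 0 : ℕ) + 1 ∧ e.1.2 1 = e.1.1 1) := by
    intro e he
    rcases edge_struct q e with h | ⟨h1', _⟩
    · exact h
    · exfalso
      have hx : (e.1.1 1 : ℕ) = (e.1.2 1 : ℕ) := congrArg Fin.val (hH e he)
      clear * - hx h1'
      omega
  -- injectivity of left endpoints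
  have hinj : Set.InjOn (fun e : OEdge q 2 => e.1.1) E := by
    intro e he e' he' h
    obtain ⟨ha, hb⟩ := hstruct e he
    obtain ⟨ha', hb'⟩ := hstruct e' he'
    simp only at h
    have hc : (e.1.1 0 : ℕ) = (e'.1.1 0 : ℕ) := by rw [h]
    have hd : e.1.1 1 = e'.1.1 1 := by rw [h]
    have c0 : e.1.2 0 = e'.1.2 0 := Fin.ext (by clear * - ha ha' hc; omega)
    have c1 : e.1.2 1 = e'.1.2 1 := by rw [hb, hb', hd]
    have h2 : e.1.2 = e'.1.2 :=
      funext (Fin.forall_fin_two.mpr ⟨c0, c1⟩)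
    exact Subtype.ext (Prod.ext h h2)
  have h2 : E.card = (E.image fun e => e.1.1).card := (card_image_of_injOn hinj).symm
  have h3 : (E.image fun e => e.1.1) ⊆ S \ M := by
    intro u hu
    obtain ⟨e, he, heu⟩ := mem_image.mp hu
    obtain ⟨ha, hb⟩ := hstruct e he
    refine mem_sdiff.mpr ⟨?_, ?_⟩
    · rw [← heu]; exact (hE e he).1
    intro hmem
    obtain ⟨-, hmax⟩ := mem_filter.mp hmem
    have := hmax e.1.2 (hE e he).2 (by rw [hb, heu])
    rw [← heu] at this
    clear * - this ha
    omega
  have h4 : (E.image fun e => e.1.1).card ≤ S.card - M.card := by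
    rw [← card_sdiff_of_subset hMS]; exact card_le_card h3
  have h5 : M.card ≤ S.card := card_le_card hMS
  clear * - h1 h2 h4 h5
  generalize hk : M.card = k at h1 h4 h5
  generalize hr : (S.image fun v => v 1).card = r at h1 ⊢
  generalize hi : (E.image fun e => e.1.1).card = i at h2 h4
  generalize hs : S.card = n at h4 h5 ⊢
  generalize he : E.card = b at h2 ⊢
  clear * - h1 h2 h4 h5
  omega

open Finset in
lemma card_edges_col (q : ℕ) (S : Finset (Fin 2 → Fin q)) (E : Finset (OEdge q 2))
    (hE : ∀ e ∈ E, e.1.1 ∈ S ∧ e.1.2 ∈ S) (hH : ∀ e ∈ E, e.1.1 0 = e.1.2 0) :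
    E.card + (S.image fun v => v 0).card ≤ S.card := by
  classical
  set M := S.filter (fun v => ∀ w ∈ S, w 0 = v 0 → (w 1 : ℕ) ≤ (v 1 : ℕ)) with hM
  have hMS : M ⊆ S := filter_subset _ _
  -- rows ≤ |M|
  have h1 : (S.image fun v => v 0).card ≤ M.card := by
    have hsub : (S.image fun v => v 0) ⊆ M.image fun v => v 0 := by
      intro y hy
      obtain ⟨v, hv, hvy⟩ := mem_image.mp hy
      have hne : (S.filter fun w => w 0 = y).Nonempty := ⟨v, mem_filter.mpr ⟨hv, hvy⟩⟩
      obtain ⟨b, hb, hmax⟩ := Finset.exists_max_image _ (fun w => (w 1 : ℕ)) hne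
      obtain ⟨hbS, hby⟩ := mem_filter.mp hb
      refine mem_image.mpr ⟨b, ?_, hby⟩
      exact mem_filter.mpr ⟨hbS, fun w hw hwb => hmax w (mem_filter.mpr ⟨hw, hwb.trans hby⟩)⟩
    exact (card_le_card hsub).trans (card_image_le)
  -- horizontal structure of each edge
  have hstruct : ∀ e ∈ E, ((e.1.2 1 : ℕ) = (e.1.1 1 : ℕ) + 1 ∧ e.1.2 0 = e.1.1 0) := by
    intro e he
    rcases edge_struct q e with ⟨h1', _⟩ | h
    · exfalso
      have hx : (e.1.1 0 : ℕ) = (e.1.2 0 : ℕ) := congrArg Fin.val (hH e he)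
      clear * - hx h1'
      omega
    · exact h
  -- injectivity of left endpoints
  have hinj : Set.InjOn (fun e : OEdge q 2 => e.1.1) E := by
    intro e he e' he' h
    obtain ⟨ha, hb⟩ := hstruct e he
    obtain ⟨ha', hb'⟩ := hstruct e' he'
    simp only at h
    have hc : (e.1.1 1 : ℕ) = (e'.1.1 1 : ℕ) := by rw [h]
    have hd : e.1.1 0 = e'.1.1 0 := by rw [h]
    have c1 : e.1.2 1 = e'.1.2 1 := Fin.ext (by clear * - ha ha' hc; omega)
    have c0 : e.1.2 0 = e'.1.2 0 := by rw [hb, hb', hd]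
    have h2 : e.1.2 = e'.1.2 :=
      funext (Fin.forall_fin_two.mpr ⟨c0, c1⟩)
    exact Subtype.ext (Prod.ext h h2)
  have h2 : E.card = (E.image fun e => e.1.1).card := (card_image_of_injOn hinj).symm
  have h3 : (E.image fun e => e.1.1) ⊆ S \ M := by
    intro u hu
    obtain ⟨e, he, heu⟩ := mem_image.mp hu
    obtain ⟨ha, hb⟩ := hstruct e he
    refine mem_sdiff.mpr ⟨?_, ?_⟩
    · rw [← heu]; exact (hE e he).1
    intro hmem
    obtain ⟨-, hmax⟩ := mem_filter.mp hmem
    have := hmax e.1.2 (hE e he).2 (by rw [hb, heu])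
    rw [← heu] at this
    clear * - this ha
    omega
  have h4 : (E.image fun e => e.1.1).card ≤ S.card - M.card := by
    rw [← card_sdiff_of_subset hMS]; exact card_le_card h3
  have h5 : M.card ≤ S.card := card_le_card hMS
  clear * - h1 h2 h4 h5
  generalize hk : M.card = k at h1 h4 h5
  generalize hr : (S.image fun v => v 0).card = r at h1 ⊢
  generalize hi : (E.image fun e => e.1.1).card = i at h2 h4
  generalize hs : S.card = n at h4 h5 ⊢
  generalize he : E.card = b at h2 ⊢
  clear * - h1 h2 h4 h5
  omega

open Finset in
lemma card_edges_le (q : ℕ) (S : Finset (Fin 2 → Fin q)) (E : Finset (OEdge q 2))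
    (hE : ∀ e ∈ E, e.1.1 ∈ S ∧ e.1.2 ∈ S) :
    E.card + ((S.image fun v => v 0).card + (S.image fun v => v 1).card) ≤ 2 * S.card := by
  classical
  set EH := E.filter (fun e => e.1.1 1 = e.1.2 1) with hEH
  set EV := E.filter (fun e => ¬ (e.1.1 1 = e.1.2 1)) with hEV
  have hsplit : EH.card + EV.card = E.card := Finset.card_filter_add_card_filter_not _
  have hH : EH.card + (S.image fun v => v 1).card ≤ S.card := by
    apply card_edges_row q S EH (fun e he => hE e (filter_subset _ _ he))
    intro e he
    exact (mem_filter.mp he).2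
  have hV : EV.card + (S.image fun v => v 0).card ≤ S.card := by
    apply card_edges_col q S EV (fun e he => hE e (filter_subset _ _ he))
    intro e he
    have hne := (mem_filter.mp he).2
    rcases edge_struct q e with ⟨_, h⟩ | ⟨_, h⟩
    · exact absurd h.symm hne
    · exact h.symm
  clear * - hsplit hH hV
  generalize h1 : EH.card = a at *
  generalize h2 : EV.card = b at *
  generalize h3 : E.card = c at *
  generalize h4 : (S.image fun v => v 0).card = r at *
  generalize h5 : (S.image fun v => v 1).card = s at *
  generalize h6 : S.card = n at *
  clear * - hsplit hH hV
  omega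

open Finset in
lemma card_le_rows_mul_cols (q : ℕ) (S : Finset (Fin 2 → Fin q)) :
    S.card ≤ (S.image fun v => v 0).card * (S.image fun v => v 1).card := by
  classical
  rw [← Finset.card_product]
  apply Finset.card_le_card_of_injOn (fun v => (v 0, v 1))
  · intro v hv
    exact Finset.mem_product.mpr ⟨mem_image_of_mem _ hv, mem_image_of_mem _ hv⟩
  · intro v _ w _ h
    have h0 : v 0 = w 0 := congrArg Prod.fst h
    have h1 : v 1 = w 1 := congrArg Prod.snd h
    exact funext (Fin.forall_fin_two.mpr ⟨h0, h1⟩)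

lemma card_edges_real (q : ℕ) (S : Finset (Fin 2 → Fin q)) (E : Finset (OEdge q 2))
    (hE : ∀ e ∈ E, e.1.1 ∈ S ∧ e.1.2 ∈ S) :
    (E.card : ℝ) ≤ 2 * S.card - 2 * Real.sqrt S.card := by
  classical
  have h1 := card_edges_le q S E hE
  have h2 := card_le_rows_mul_cols q S
  set r := (S.image fun v => v 0).card with hr
  set c := (S.image fun v => v 1).card with hc
  have hr0 : (0:ℝ) ≤ (r:ℝ) := Nat.cast_nonneg _
  have hc0 : (0:ℝ) ≤ (c:ℝ) := Nat.cast_nonneg _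
  have key : 2 * Real.sqrt S.card ≤ (r:ℝ) + c := by
    have ha : Real.sqrt S.card ≤ Real.sqrt ((r:ℝ) * c) := by
      apply Real.sqrt_le_sqrt
      exact_mod_cast h2
    have hb : Real.sqrt ((r:ℝ) * c) = Real.sqrt r * Real.sqrt c := Real.sqrt_mul hr0 _
    nlinarith [sq_nonneg (Real.sqrt r - Real.sqrt c), Real.sq_sqrt hr0, Real.sq_sqrt hc0,
      Real.sqrt_nonneg ((r:ℝ) * c)]
  have h1' : (E.card : ℝ) + ((r:ℝ) + c) ≤ 2 * S.card := by exact_mod_cast h1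
  linarith

lemma sqrt_add_one_le (x y : ℝ) (hx : 1 ≤ x) (hy : 1 ≤ y) :
    Real.sqrt (x + y - 1) + 1 ≤ Real.sqrt x + Real.sqrt y := by
  have hx0 : (0:ℝ) ≤ x := by linarith
  have hy0 : (0:ℝ) ≤ y := by linarith
  have ha : 1 ≤ Real.sqrt x := by
    rw [show (1:ℝ) = Real.sqrt 1 from (Real.sqrt_one).symm]
    exact Real.sqrt_le_sqrt hx
  have hb : 1 ≤ Real.sqrt y := by
    rw [show (1:ℝ) = Real.sqrt 1 from (Real.sqrt_one).symm]
    exact Real.sqrt_le_sqrt hy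
  have h2 : x + y - 1 ≤ (Real.sqrt x + Real.sqrt y - 1)^2 := by
    nlinarith [Real.sq_sqrt hx0, Real.sq_sqrt hy0,
      mul_nonneg (sub_nonneg.mpr ha) (sub_nonneg.mpr hb)]
  have h3 := Real.sqrt_le_sqrt h2
  rw [Real.sqrt_sq (by linarith)] at h3
  linarith

open Finset in
lemma sum_sqrt_ge {α : Type*} (t : Finset α) (v : α → ℝ) (hv : ∀ c ∈ t, 1 ≤ v c) :
    Real.sqrt ((∑ c ∈ t, v c) - t.card + 1) + t.card - 1 ≤ ∑ c ∈ t, Real.sqrt (v c) := by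
  classical
  induction t using Finset.cons_induction with
  | empty => simp
  | cons a t ha ih =>
    rw [Finset.sum_cons, Finset.sum_cons, Finset.card_cons]
    have hva := hv a (Finset.mem_cons_self a t)
    have hv' : ∀ c ∈ t, 1 ≤ v c := fun c hc => hv c (Finset.mem_cons.mpr (Or.inr hc))
    have hT : (t.card : ℝ) ≤ ∑ c ∈ t, v c := by
      calc (t.card:ℝ) = ∑ _c ∈ t, (1:ℝ) := by simp
        _ ≤ _ := Finset.sum_le_sum hv'
    have key := sqrt_add_one_le (v a) ((∑ c ∈ t, v c) - t.card + 1) hva (by linarith)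
    have ih' := ih hv'
    push_cast
    rw [show v a + (∑ c ∈ t, v c) - ((t.card:ℝ) + 1) + 1
        = v a + ((∑ c ∈ t, v c) - t.card + 1) - 1 from by ring]
    linarith

open Finset in
lemma components_card_le (q : ℕ) (ℓ : ℕ) (m : ℕ) (Λ : Finset (OEdge q 2))
    [inst : Fintype (gridGraph q Λ).ConnectedComponent]
    (hcard : ℓ ≤ Λ.card)
    (hm : (m : ℝ) ≥ (q : ℝ) ^ 2 - (1 / 2) * ((ℓ : ℝ) + Real.sqrt (2 * (ℓ : ℝ) + 1) - 1)) :
    Fintype.card (gridGraph q Λ).ConnectedComponent ≤ m := by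
  classical
  set CC := (gridGraph q Λ).ConnectedComponent
  set mk : (Fin 2 → Fin q) → CC := (gridGraph q Λ).connectedComponentMk with hmk
  have hn : Fintype.card (Fin 2 → Fin q) = q ^ 2 := by
    simp [Fintype.card_fun]
  -- fibers
  have hfib : ∀ c : CC, ((Finset.univ.filter fun v => mk v = c)).Nonempty := by
    intro c
    exact ⟨c.out, Finset.mem_filter.mpr ⟨Finset.mem_univ _, c.out_eq⟩⟩
  -- vertex count
  have hvsum : ∑ c : CC, ((Finset.univ.filter fun v => mk v = c)).card = q ^ 2 := by
    rw [← hn, ← Finset.card_univ]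
    exact (Finset.card_eq_sum_card_fiberwise (fun v _ => Finset.mem_univ (mk v))).symm
  -- edge count
  have hesum : ∑ c : CC, ((Λ.filter fun e => mk e.1.1 = c)).card = Λ.card :=
    (Finset.card_eq_sum_card_fiberwise (fun e _ => Finset.mem_univ (mk e.1.1))).symm
  -- per-component bound
  have hper : ∀ c : CC, ((Λ.filter fun e => mk e.1.1 = c).card : ℝ) ≤
      2 * ((Finset.univ.filter fun v => mk v = c)).card -
      2 * Real.sqrt ((Finset.univ.filter fun v => mk v = c)).card := by
    intro c
    apply card_edges_real
    intro e he
    obtain ⟨heΛ, hec⟩ := Finset.mem_filter.mp he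
    have hadj : (gridGraph q Λ).Adj e.1.1 e.1.2 :=
      ⟨edge_ne q e, e, heΛ, Or.inl ⟨rfl, rfl⟩⟩
    have h2 : mk e.1.2 = c := by
      rw [← hec]
      exact (SimpleGraph.ConnectedComponent.eq.mpr hadj.reachable).symm
    exact ⟨Finset.mem_filter.mpr ⟨Finset.mem_univ _, hec⟩,
      Finset.mem_filter.mpr ⟨Finset.mem_univ _, h2⟩⟩
  set K := Fintype.card CC with hKdef
  set n : ℝ := (q : ℝ) ^ 2 with hndef
  -- sum of sqrt bound
  have hv1 : ∀ c ∈ (Finset.univ : Finset CC),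
      1 ≤ (((Finset.univ.filter fun v => mk v = c)).card : ℝ) := by
    intro c _
    exact_mod_cast Finset.card_pos.mpr (hfib c)
  have hsq := sum_sqrt_ge Finset.univ
    (fun c => (((Finset.univ.filter fun v => mk v = c)).card : ℝ)) hv1
  have hvsum' : ∑ c : CC, (((Finset.univ.filter fun v => mk v = c)).card : ℝ) = n := by
    rw [hndef]
    exact_mod_cast congrArg (Nat.cast (R := ℝ)) hvsum
  have hKcard : (Finset.univ : Finset CC).card = K := Finset.card_univ
  rw [hvsum', hKcard] at hsq
  -- total edge bound
  have htot : (ℓ : ℝ) ≤ 2 * n - 2 * (Real.sqrt (n - K + 1) + K - 1) := by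
    have h1 : (ℓ : ℝ) ≤ (Λ.card : ℝ) := by exact_mod_cast hcard
    have h2 : (Λ.card : ℝ) = ∑ c : CC, ((Λ.filter fun e => mk e.1.1 = c).card : ℝ) := by
      exact_mod_cast congrArg (Nat.cast (R := ℝ)) hesum.symm
    have h3 : ∑ c : CC, ((Λ.filter fun e => mk e.1.1 = c).card : ℝ) ≤
        ∑ c : CC, (2 * (((Finset.univ.filter fun v => mk v = c)).card : ℝ) -
          2 * Real.sqrt (((Finset.univ.filter fun v => mk v = c)).card)) :=
      Finset.sum_le_sum (fun c _ => hper c)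
    have h4 : ∑ c : CC, (2 * (((Finset.univ.filter fun v => mk v = c)).card : ℝ) -
          2 * Real.sqrt (((Finset.univ.filter fun v => mk v = c)).card))
        = 2 * n - 2 * ∑ c : CC,
            Real.sqrt (((Finset.univ.filter fun v => mk v = c)).card) := by
      rw [Finset.sum_sub_distrib, ← Finset.mul_sum, ← Finset.mul_sum, hvsum']
    have h5 : Real.sqrt (n - K + 1) + K - 1 ≤
        ∑ c : CC, Real.sqrt (((Finset.univ.filter fun v => mk v = c)).card) := hsq
    linarith
  -- now pure real arithmetic
  have hKn : (K : ℝ) ≤ n := by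
    have : (K : ℝ) = ∑ _c : CC, (1:ℝ) := by simp [hKdef]
    rw [this, ← hvsum']
    exact Finset.sum_le_sum hv1
  set t := Real.sqrt (n - K + 1) with htdef
  have htnn : (0:ℝ) ≤ n - K + 1 := by linarith
  have ht1 : 1 ≤ t := by
    have h1 : Real.sqrt 1 ≤ t := Real.sqrt_le_sqrt (by linarith)
    rwa [Real.sqrt_one] at h1
  have ht2 : t ^ 2 = n - K + 1 := Real.sq_sqrt (by linarith)
  have hs : Real.sqrt (2 * (ℓ:ℝ) + 1) ≤ 2 * t - 1 := by
    have h1 : 2 * (ℓ:ℝ) + 1 ≤ (2 * t - 1) ^ 2 := by nlinarith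
    have h2 := Real.sqrt_le_sqrt h1
    rwa [Real.sqrt_sq (by linarith)] at h2
  have hfin : (K : ℝ) ≤ n - 1 / 2 * ((ℓ:ℝ) + Real.sqrt (2 * (ℓ:ℝ) + 1) - 1) := by
    linarith [htot, ht2, hs]
  have hKm : K ≤ m := by exact_mod_cast le_trans hfin hm
  refine le_of_eq_of_le ?_ hKm
  rw [hKdef]
  congr 1
  exact Subsingleton.elim _ _


/-- 2D, known cosupport: if `m ≥ n − (1/2)(ℓ + √(2ℓ + 1) − 1)` with `n = q²`, then
`κ_∇(ℓ) ≤ m`, i.e. `m` measurements meet the known-cosupport uniqueness criterion. -/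
theorem stmt_11 (q : ℕ) (hq : 3 ≤ q) (ℓ : ℕ) (hl : 4 < ℓ) (hlp : ℓ ≤ 2 * q * (q - 1))
    (m : ℕ)
    (hm : (m : ℝ) ≥ (q : ℝ) ^ 2 - (1 / 2) * ((ℓ : ℝ) + Real.sqrt (2 * (ℓ : ℝ) + 1) - 1)) :
    kappaGrad q 2 ℓ ≤ m := by
  classical
  rw [kappaGrad]
  apply Finset.sup_le
  intro Λ hΛ
  have hcard : ℓ ≤ Λ.card := (Finset.mem_filter.mp hΛ).2
  haveI : Fintype (gridGraph q Λ).ConnectedComponent := Fintype.ofFinite _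
  exact (finrank_Wgrad_le q Λ).trans (components_card_le q ℓ m Λ hcard hm)
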